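/- arXiv:hep-th/0106029 — 2 statements merged into one kernel-verified Lean document; each statement's English description precedes it below -/
import Mathlib

section
/- Peter–Weyl decomposition for a finite group, part (i), irreducibility of the summands: for a finite group G and an irreducible finite-dimensional complex representation (ρ, V) of G, the representation of the product group G×G on V* ⊗ V defined by (a,b) ↦ ρ*(a) ⊗ ρ(b) is irreducible. -/
/-!
STATEMENT 1: For a finite group `G` and an irreducible finite-dimensional complex
representation `(ρ, V)` of `G`, the representation of `G × G` on `V* ⊗ V` given by
`(a, b) ↦ ρ*(a) ⊗ ρ(b)` (where `ρ*(a) η = η ∘ ρ(a⁻¹)`) is irreducible.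
-/

open scoped TensorProduct


/-- Schur: an endomorphism commuting with an irreducible rep is scalar. -/
theorem schur_scalar'
    {G : Type*} [Group G]
    {V : Type*} [AddCommGroup V] [Module ℂ V] [FiniteDimensional ℂ V]
    (ρ : Representation ℂ G V) (hnt : Nontrivial V)
    (hirr : ∀ U : Submodule ℂ V, (∀ g : G, ∀ v ∈ U, ρ g v ∈ U) → U = ⊥ ∨ U = ⊤)
    (φ : Module.End ℂ V) (hφ : ∀ g : G, φ ∘ₗ ρ g = ρ g ∘ₗ φ) :
    ∃ c : ℂ, φ = c • LinearMap.id := by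
  obtain ⟨c, hc⟩ := Module.End.exists_eigenvalue φ
  refine ⟨c, ?_⟩
  set K : Submodule ℂ V := LinearMap.ker (φ - c • LinearMap.id) with hK
  have hKinv : ∀ g : G, ∀ v ∈ K, ρ g v ∈ K := by
    intro g v hv
    simp only [hK, LinearMap.mem_ker, LinearMap.sub_apply, LinearMap.smul_apply,
      LinearMap.id_apply] at hv ⊢
    have := congrArg (fun ψ => ψ v) (hφ g)
    simp only [LinearMap.comp_apply] at this
    rw [this, ← map_smul, ← map_sub, hv, map_zero]
  have hKne : K ≠ ⊥ := by
    obtain ⟨v, hv, hv0⟩ := hc.exists_hasEigenvector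
    rw [Module.End.mem_genEigenspace_one] at hv
    intro hbot
    apply hv0
    have hvK : v ∈ K := by
      simp only [hK, LinearMap.mem_ker, LinearMap.sub_apply, LinearMap.smul_apply,
        LinearMap.id_apply, sub_eq_zero]
      exact hv
    simpa [hbot] using hvK
  rcases hirr K hKinv with h | h
  · exact absurd h hKne
  · ext v
    have : v ∈ K := h ▸ Submodule.mem_top
    simp only [hK, LinearMap.mem_ker, LinearMap.sub_apply, LinearMap.smul_apply,
      LinearMap.id_apply, sub_eq_zero] at this
    simpa using this

theorem burnside_span_top
    {G : Type*} [Group G] [Fintype G]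
    {V : Type*} [AddCommGroup V] [Module ℂ V] [FiniteDimensional ℂ V]
    (ρ : Representation ℂ G V) (hnt : Nontrivial V)
    (hirr : ∀ U : Submodule ℂ V, (∀ g : G, ∀ v ∈ U, ρ g v ∈ U) → U = ⊥ ∨ U = ⊤) :
    Submodule.span ℂ (Set.range fun g : G => (ρ g : Module.End ℂ V)) = ⊤ := by
  classical
  set A : Submodule ℂ (Module.End ℂ V) :=
    Submodule.span ℂ (Set.range fun g : G => (ρ g : Module.End ℂ V)) with hA
  have hone : (1 : Module.End ℂ V) ∈ A := by
    apply Submodule.subset_span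
    exact ⟨1, by simp⟩
  have hmulleft : ∀ g : G, ∀ x ∈ A, (ρ g : Module.End ℂ V) * x ∈ A := by
    intro g x hx
    induction hx using Submodule.span_induction with
    | mem y hy =>
      obtain ⟨h, rfl⟩ := hy
      apply Submodule.subset_span
      exact ⟨g * h, by simp [map_mul]⟩
    | zero => simp
    | add y z _ _ hy hz => rw [mul_add]; exact A.add_mem hy hz
    | smul c y _ hy => rw [mul_smul_comm]; exact A.smul_mem c hy
  -- setup
  set n := Module.finrank ℂ V with hn
  set b : Module.Basis (Fin n) ℂ V := Module.finBasis ℂ V with hb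
  set σ : G → Module.End ℂ (Fin n → V) :=
    fun g => LinearMap.pi (fun i => (ρ g) ∘ₗ LinearMap.proj i) with hσ
  have σ_apply : ∀ g (x : Fin n → V) i, σ g x i = ρ g (x i) := fun g x i => rfl
  have σ_mul : ∀ g h : G, σ g ∘ₗ σ h = σ (g * h) := by
    intro g h; ext x i; simp [σ_apply, map_mul]
  have σ_inv_cancel : ∀ g : G, ∀ x, σ g (σ g⁻¹ x) = x := by
    intro g x
    have := congrArg (fun ψ => ψ x) (σ_mul g g⁻¹)
    simpa [map_one, hσ, Module.End.one_eq_id] using this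
  set Ev : Module.End ℂ V →ₗ[ℂ] (Fin n → V) :=
    LinearMap.pi (fun i => LinearMap.applyₗ (b i)) with hEv
  have Ev_apply : ∀ (f : Module.End ℂ V) i, Ev f i = f (b i) := fun f i => rfl
  set M : Submodule ℂ (Fin n → V) := Submodule.map Ev A with hM
  have hMinv : ∀ g : G, ∀ x ∈ M, σ g x ∈ M := by
    rintro g x ⟨f, hf, rfl⟩
    refine ⟨(ρ g : Module.End ℂ V) * f, hmulleft g f hf, ?_⟩
    funext i
    simp [Ev_apply, σ_apply, Module.End.mul_apply]
  -- averaged projection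
  obtain ⟨q, hq⟩ := Submodule.exists_isCompl M
  set pr : Module.End ℂ (Fin n → V) := M.subtype ∘ₗ (M.linearProjOfIsCompl q hq) with hpr
  have pr_mem : ∀ x, pr x ∈ M := fun x => (M.linearProjOfIsCompl q hq x).2
  have pr_id : ∀ x ∈ M, pr x = x := by
    intro x hx
    have := Submodule.linearProjOfIsCompl_apply_left hq ⟨x, hx⟩
    exact congrArg Subtype.val this
  set π : Module.End ℂ (Fin n → V) :=
    (Fintype.card G : ℂ)⁻¹ • ∑ h : G, σ h ∘ₗ pr ∘ₗ σ h⁻¹ with hπ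
  have cardne : (Fintype.card G : ℂ) ≠ 0 := by
    exact_mod_cast Nat.cast_ne_zero.mpr Fintype.card_ne_zero
  have πmem : ∀ x, π x ∈ M := by
    intro x
    simp only [hπ, LinearMap.smul_apply, LinearMap.sum_apply, LinearMap.comp_apply]
    exact M.smul_mem _ (Submodule.sum_mem M fun h _ => hMinv h _ (pr_mem _))
  have πid : ∀ x ∈ M, π x = x := by
    intro x hx
    have : ∀ h : G, σ h (pr (σ h⁻¹ x)) = x := by
      intro h
      rw [pr_id _ (hMinv h⁻¹ x hx), σ_inv_cancel]
    simp only [hπ, LinearMap.smul_apply, LinearMap.sum_apply, LinearMap.comp_apply, this]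
    rw [Finset.sum_const, Finset.card_univ, ← Nat.cast_smul_eq_nsmul ℂ, smul_smul,
      inv_mul_cancel₀ cardne, one_smul]
  have σ_comp : ∀ (a b' : G) (x : Fin n → V), σ a (σ b' x) = σ (a * b') x := by
    intro a b' x
    exact congrArg (fun ψ => ψ x) (σ_mul a b')
  have πequiv : ∀ (g : G) (x : Fin n → V), σ g (π x) = π (σ g x) := by
    intro g x
    simp only [hπ, LinearMap.smul_apply, LinearMap.sum_apply, LinearMap.comp_apply,
      map_smul, map_sum]
    congr 1
    refine Fintype.sum_equiv (Equiv.mulLeft g) _ _ ?_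
    intro h
    simp only [Equiv.coe_mulLeft, σ_comp]
    have hgh : (g * h)⁻¹ * g = h⁻¹ := by group
    rw [hgh]
  -- Schur: π is given by a scalar matrix
  have hcomp : ∀ i j : Fin n, ∃ c : ℂ,
      (LinearMap.proj i ∘ₗ π ∘ₗ LinearMap.single ℂ (fun _ : Fin n => V) j) = c • LinearMap.id := by
    intro i j
    apply schur_scalar' ρ hnt hirr
    intro g
    ext v
    simp only [LinearMap.comp_apply, LinearMap.single_apply, LinearMap.proj_apply]
    have e1 : Pi.single j (ρ g v) = σ g (Pi.single j v) := by
      funext i'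
      rw [σ_apply]
      by_cases hij : i' = j
      · subst hij; simp
      · simp [Pi.single_eq_of_ne hij]
    rw [e1, ← πequiv g, σ_apply]
  choose c hc using hcomp
  have πmatrix : ∀ (x : Fin n → V) (i : Fin n), π x i = ∑ j, c i j • x j := by
    intro x i
    conv_lhs => rw [← Finset.univ_sum_single x]
    rw [map_sum]
    have : ∀ j, π (Pi.single j (x j)) i = c i j • x j := by
      intro j
      have := congrArg (fun ψ => ψ (x j)) (hc i j)
      simpa using this
    simp only [Finset.sum_apply, this]
  -- conclusion
  rw [eq_top_iff]
  intro f _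
  have hw : Ev 1 ∈ M := ⟨1, hone, rfl⟩
  have hπw : π (Ev 1) = Ev 1 := πid _ hw
  set x : Fin n → V := fun i => f (b i) with hx
  have hπx : π x = x := by
    funext i
    rw [πmatrix]
    have : ∀ j, c i j • x j = f (c i j • b j) := by intro j; simp [hx, map_smul]
    simp only [this]
    rw [← map_sum]
    have : ∑ j, c i j • b j = Ev 1 i := by
      have := congrFun hπw i
      rw [πmatrix] at this
      simpa [Ev_apply] using this
    rw [this]
    simp [Ev_apply, hx]
  have hxM : x ∈ M := hπx ▸ πmem x
  obtain ⟨fA, hfA, hfAx⟩ := hxM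
  have : fA = f := by
    apply b.ext
    intro i
    have := congrFun hfAx i
    simpa [Ev_apply, hx] using this
  exact this ▸ hfA

/-- **Irreducibility of the Peter–Weyl summands.** -/
theorem dual_tensor_rep_irreducible
    {G : Type*} [Group G] [Fintype G]
    {V : Type*} [AddCommGroup V] [Module ℂ V] [FiniteDimensional ℂ V]
    (ρ : Representation ℂ G V)
    -- `(ρ, V)` is irreducible
    (hnt : Nontrivial V)
    (hirr : ∀ U : Submodule ℂ V, (∀ g : G, ∀ v ∈ U, ρ g v ∈ U) → U = ⊥ ∨ U = ⊤) :
    -- the representation `(a, b) ↦ ρ*(a) ⊗ ρ(b)` of `G × G` on `V* ⊗ V` is irreducible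
    Nontrivial (Module.Dual ℂ V ⊗[ℂ] V) ∧
    ∀ U : Submodule ℂ (Module.Dual ℂ V ⊗[ℂ] V),
      (∀ (a b : G), ∀ x ∈ U, TensorProduct.map ((ρ a⁻¹).dualMap) (ρ b) x ∈ U) →
      U = ⊥ ∨ U = ⊤ := by
  classical
  set e := dualTensorHomEquiv ℂ V V with he
  have hEndnt : Nontrivial (V →ₗ[ℂ] V) := by
    obtain ⟨v, hv⟩ := exists_ne (0 : V)
    exact ⟨LinearMap.id, 0, fun h => hv (by simpa using congrArg (fun ψ => ψ v) h)⟩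
  constructor
  · exact Equiv.nontrivial e.toEquiv
  intro U hU
  by_cases hbot : U = ⊥
  · exact Or.inl hbot
  right
  -- the comparison lemma
  have ecomp : ∀ (f g : Module.End ℂ V) (x : Module.Dual ℂ V ⊗[ℂ] V),
      e (TensorProduct.map f.dualMap g x) = g ∘ₗ (e x) ∘ₗ f := by
    intro f g x
    induction x using TensorProduct.induction_on with
    | zero =>
      rw [_root_.map_zero, _root_.map_zero, LinearMap.zero_comp, LinearMap.comp_zero]
    | tmul η v => ext u; simp [he]
    | add a b ha hb =>
      simp only [map_add, ha, hb, LinearMap.add_comp, LinearMap.comp_add]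
  -- closure under the span
  set A : Submodule ℂ (Module.End ℂ V) :=
    Submodule.span ℂ (Set.range fun g : G => (ρ g : Module.End ℂ V)) with hA
  have dzero : (0 : Module.End ℂ V).dualMap = 0 := by ext η u; simp
  have dadd : ∀ f₁ f₂ : Module.End ℂ V, (f₁ + f₂).dualMap = f₁.dualMap + f₂.dualMap := by
    intro f₁ f₂; ext η u; simp
  have dsmul : ∀ (c : ℂ) (f : Module.End ℂ V), (c • f).dualMap = c • f.dualMap := by
    intro c f; ext η u; simp
  have hclosed : ∀ f ∈ A, ∀ g ∈ A, ∀ x ∈ U, TensorProduct.map f.dualMap g x ∈ U := by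
    intro f hf
    induction hf using Submodule.span_induction with
    | mem f' hf' =>
      obtain ⟨a, rfl⟩ := hf'
      intro g hg
      induction hg using Submodule.span_induction with
      | mem g' hg' =>
        obtain ⟨b, rfl⟩ := hg'
        intro x hx
        have := hU a⁻¹ b x hx
        simpa using this
      | zero =>
        intro x hx
        simp only [TensorProduct.map_zero_right, LinearMap.zero_apply]
        exact U.zero_mem
      | add g₁ g₂ _ _ h1 h2 =>
        intro x hx
        rw [TensorProduct.map_add_right, LinearMap.add_apply]
        exact U.add_mem (h1 x hx) (h2 x hx)
      | smul c g' _ h1 =>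
        intro x hx
        rw [TensorProduct.map_smul_right, LinearMap.smul_apply]
        exact U.smul_mem c (h1 x hx)
    | zero =>
      intro g _ x hx
      rw [dzero, TensorProduct.map_zero_left, LinearMap.zero_apply]
      exact U.zero_mem
    | add f₁ f₂ hf1 hf2 h1 h2 =>
      intro g hg x hx
      rw [dadd, TensorProduct.map_add_left, LinearMap.add_apply]
      exact U.add_mem (h1 g hg x hx) (h2 g hg x hx)
    | smul c f' hf' h1 =>
      intro g hg x hx
      rw [dsmul, TensorProduct.map_smul_left, LinearMap.smul_apply]
      exact U.smul_mem c (h1 g hg x hx)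
  have hclosed' : ∀ (f g : Module.End ℂ V), ∀ x ∈ U, TensorProduct.map f.dualMap g x ∈ U := by
    have htop := burnside_span_top ρ hnt hirr
    intro f g x hx
    have htop' : A = ⊤ := htop
    exact hclosed f (by rw [htop']; trivial) g (by rw [htop']; trivial) x hx
  -- pick a nonzero element
  obtain ⟨x₀, hx₀U, hx₀⟩ := Submodule.ne_bot_iff U |>.mp hbot
  set F : Module.End ℂ V := e x₀ with hF
  have hFne : F ≠ 0 := fun h => hx₀ (by
    apply e.injective; rw [← hF, h]; simp)
  obtain ⟨v, hv⟩ : ∃ v, F v ≠ 0 := by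
    by_contra h
    push_neg at h
    exact hFne (LinearMap.ext fun v => by simpa using h v)
  obtain ⟨φ, hφ⟩ : ∃ φ : Module.Dual ℂ V, φ (F v) ≠ 0 := by
    by_contra h
    push_neg at h
    exact hv ((Module.forall_dual_apply_eq_zero_iff ℂ (F v)).mp h)
  set ξ : Module.Dual ℂ V := (φ (F v))⁻¹ • φ with hξ
  have hξFv : ξ (F v) = 1 := by
    simp [hξ, inv_mul_cancel₀ hφ]
  -- show U = ⊤
  rw [eq_top_iff]
  rintro z -
  induction z using TensorProduct.induction_on with
  | zero => exact U.zero_mem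
  | add a b ha hb => exact U.add_mem ha hb
  | tmul η w =>
    set p : Module.End ℂ V := e (η ⊗ₜ[ℂ] v) with hp
    set q : Module.End ℂ V := e (ξ ⊗ₜ[ℂ] w) with hq
    have hmem := hclosed' p q x₀ hx₀U
    have : TensorProduct.map p.dualMap q x₀ = η ⊗ₜ[ℂ] w := by
      apply e.injective
      rw [ecomp]
      ext u
      have hd : (dualTensorHom ℂ V V) x₀ = F := rfl
      simp only [LinearMap.comp_apply, hp, hq, he]
      simp [map_smul, hd, hξFv]
    rwa [this] at hmem
end

section
/- Plancherel-type norm formula for a finite group: let f : G → ℂ be any function, and let (f_ρ)_{ρ∈Irr}, f_ρ ∈ V_ρ* ⊗ V_ρ, be the unique family such that f(g) = ∑_{ρ∈Irr} (ev_g f_ρ) for all g ∈ G, where ev_g is the linear map V_ρ* ⊗ V_ρ → ℂ sending η ⊗ v to η(ρ(g)v). Then (1/|G|)·∑_{g∈G} |f(g)|² = ∑_{ρ∈Irr} (1/dim V_ρ)·‖f_ρ‖², where ‖·‖ is the norm on V_ρ* ⊗ V_ρ induced by the Hilbert space inner product on V_ρ and the dual inner product on V_ρ* (making the dual basis of an orthonormal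 basis orthonormal). -/
/-!
STATEMENT 12: Plancherel-type norm formula for a finite group:
`(1/|G|)·∑_g |f(g)|² = ∑_ρ (1/dim V_ρ)·‖f_ρ‖²`.

`Irr` is modelled concretely by a finite family of irreducible unitary matrix
representations `ρ i : G → Matrix (Fin (d i)) (Fin (d i)) ℂ`, one from each
isomorphism class (a unitary matrix representation is a unitary representation with
a fixed orthonormal basis).  The Peter–Weyl component `f_ρ ∈ V_ρ* ⊗ V_ρ` is recorded
by its coordinate matrix `A i` with respect to the product of the dual basis and the
basis: then `ev_g (f_ρ) = ∑_{a,b} A_{ab}·ρ(g)_{ab}` and, since these bases are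
orthonormal for the induced inner product on `V_ρ* ⊗ V_ρ`,
`‖f_ρ‖² = ∑_{a,b} |A_{ab}|²`.
-/


open Matrix in
/-- Schur: intertwiner between non-isomorphic irreducibles is zero. -/
private lemma schur_zero' {G : Type*} [Group G] {m n : ℕ}
    (σ : G → Matrix (Fin m) (Fin m) ℂ) (τ : G → Matrix (Fin n) (Fin n) ℂ)
    (hirrσ : ∀ U : Submodule ℂ (Fin m → ℂ),
      (∀ g : G, ∀ u ∈ U, (σ g).mulVec u ∈ U) → U = ⊥ ∨ U = ⊤)
    (hirrτ : ∀ U : Submodule ℂ (Fin n → ℂ),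
      (∀ g : G, ∀ u ∈ U, (τ g).mulVec u ∈ U) → U = ⊥ ∨ U = ⊤)
    (T : Matrix (Fin n) (Fin m) ℂ)
    (hT : ∀ g : G, τ g * T = T * σ g)
    (hno : ¬∃ T' : Matrix (Fin n) (Fin m) ℂ,
        Function.Bijective T'.mulVec ∧ ∀ g : G, τ g * T' = T' * σ g) :
    T = 0 := by
  set L : (Fin m → ℂ) →ₗ[ℂ] (Fin n → ℂ) := Matrix.mulVecLin T with hL
  have hLapp : ∀ v, L v = T.mulVec v := fun v => rfl
  have hker : LinearMap.ker L = ⊥ ∨ LinearMap.ker L = ⊤ := by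
    apply hirrσ
    intro g u hu
    simp only [LinearMap.mem_ker, hLapp] at hu ⊢
    rw [Matrix.mulVec_mulVec, ← hT, ← Matrix.mulVec_mulVec, hu, Matrix.mulVec_zero]
  have hrange : LinearMap.range L = ⊥ ∨ LinearMap.range L = ⊤ := by
    apply hirrτ
    intro g u hu
    obtain ⟨v, rfl⟩ := hu
    refine ⟨(σ g).mulVec v, ?_⟩
    simp only [hLapp]
    rw [Matrix.mulVec_mulVec, ← hT, ← Matrix.mulVec_mulVec]
  have hTzero : L = 0 → T = 0 := by
    intro h
    apply Matrix.toLin'.injective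
    rw [LinearEquiv.map_zero]
    refine LinearMap.ext fun v => ?_
    simpa [Matrix.toLin'_apply, hLapp] using congrFun (congrArg DFunLike.coe h) v
  rcases hker with hk | hk
  · rcases hrange with hr | hr
    · exact hTzero (LinearMap.range_eq_bot.mp hr)
    · exfalso
      exact hno ⟨T, ⟨LinearMap.ker_eq_bot.mp hk, LinearMap.range_eq_top.mp hr⟩, hT⟩
  · exact hTzero (LinearMap.ker_eq_top.mp hk)

open Matrix in
/-- Schur: a matrix commuting with an irreducible representation is scalar. -/
private lemma schur_scalar'_s12 {G : Type*} [Group G] {n : ℕ} (hn : 0 < n)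
    (σ : G → Matrix (Fin n) (Fin n) ℂ)
    (hirr : ∀ U : Submodule ℂ (Fin n → ℂ),
      (∀ g : G, ∀ u ∈ U, (σ g).mulVec u ∈ U) → U = ⊥ ∨ U = ⊤)
    (T : Matrix (Fin n) (Fin n) ℂ)
    (hT : ∀ g : G, σ g * T = T * σ g) :
    T = (Matrix.trace T / n) • 1 := by
  haveI : Nonempty (Fin n) := Fin.pos_iff_nonempty.mp hn
  obtain ⟨μ, hμ⟩ := Module.End.exists_eigenvalue (Matrix.toLin' T)
  have hinv : ∀ g : G, ∀ u ∈ Module.End.eigenspace (Matrix.toLin' T) μ,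
      (σ g).mulVec u ∈ Module.End.eigenspace (Matrix.toLin' T) μ := by
    intro g u hu
    rw [Module.End.mem_eigenspace_iff] at hu ⊢
    rw [Matrix.toLin'_apply] at hu ⊢
    rw [Matrix.mulVec_mulVec, ← hT, ← Matrix.mulVec_mulVec, hu, Matrix.mulVec_smul]
  have hsub : Module.End.eigenspace (Matrix.toLin' T) μ = ⊤ := by
    rcases hirr _ hinv with h | h
    · exact absurd h hμ
    · exact h
  have hTμ : T = μ • 1 := by
    apply Matrix.toLin'.injective
    refine LinearMap.ext fun v => ?_
    have : v ∈ Module.End.eigenspace (Matrix.toLin' T) μ := hsub ▸ Submodule.mem_top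
    rw [Module.End.mem_eigenspace_iff] at this
    simp [Matrix.toLin'_apply, this, Matrix.smul_mulVec]
  have hn' : (n : ℂ) ≠ 0 := Nat.cast_ne_zero.mpr hn.ne'
  rw [hTμ, Matrix.trace_smul, Matrix.trace_one]
  congr 1
  rw [smul_eq_mul, Fintype.card_fin]
  field_simp

open Matrix

section Main

variable {G : Type*} [Group G] [Fintype G] {ι : Type*} [Fintype ι]
    (d : ι → ℕ) (ρ : ∀ i, G → Matrix (Fin (d i)) (Fin (d i)) ℂ)
    (hone : ∀ i, ρ i 1 = 1)
    (hmul : ∀ i (a b : G), ρ i (a * b) = ρ i a * ρ i b)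
    (hunit : ∀ i (g : G), (ρ i g).conjTranspose * ρ i g = 1)
    (hdpos : ∀ i, 0 < d i)
    (hirr : ∀ i (U : Submodule ℂ (Fin (d i) → ℂ)),
      (∀ g : G, ∀ u ∈ U, (ρ i g).mulVec u ∈ U) → U = ⊥ ∨ U = ⊤)
    (hpair : ∀ i j, i ≠ j →
      ¬∃ T : Matrix (Fin (d j)) (Fin (d i)) ℂ,
        Function.Bijective T.mulVec ∧ ∀ g : G, ρ j g * T = T * ρ i g)

set_option linter.unusedSectionVars false

include hone hmul in
private lemma rho_mul_inv (i : ι) (g : G) : ρ i g * ρ i g⁻¹ = 1 := by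
  rw [← hmul, mul_inv_cancel, hone]

include hone hmul hunit in
private lemma rho_inv_eq (i : ι) (g : G) : ρ i g⁻¹ = (ρ i g)ᴴ := by
  have h1 : ρ i g⁻¹ * ρ i g = 1 := by rw [← hmul, inv_mul_cancel, hone]
  have h2 : ρ i g * (ρ i g)ᴴ = 1 := mul_eq_one_comm.mp (hunit i g)
  calc ρ i g⁻¹ = ρ i g⁻¹ * (ρ i g * (ρ i g)ᴴ) := by rw [h2, mul_one]
    _ = (ρ i g⁻¹ * ρ i g) * (ρ i g)ᴴ := by rw [mul_assoc]
    _ = (ρ i g)ᴴ := by rw [h1, one_mul]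

include hone hmul hunit in
private lemma rho_star (i : ι) (g : G) (x y : Fin (d i)) :
    star (ρ i g x y) = ρ i g⁻¹ y x := by
  rw [rho_inv_eq d ρ hone hmul hunit]; rfl

include hone hmul in
private lemma sum_intertwine (i j : ι) (E : Matrix (Fin (d j)) (Fin (d i)) ℂ) (h : G) :
    ρ j h * (∑ g : G, ρ j g⁻¹ * E * ρ i g) = (∑ g : G, ρ j g⁻¹ * E * ρ i g) * ρ i h := by
  rw [Matrix.mul_sum, Matrix.sum_mul]
  refine Fintype.sum_equiv (Equiv.mulRight h⁻¹) _ _ fun g => ?_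
  show ρ j h * (ρ j g⁻¹ * E * ρ i g) = ρ j (g * h⁻¹)⁻¹ * E * ρ i (g * h⁻¹) * ρ i h
  have h1 : ρ i h⁻¹ * ρ i h = 1 := by rw [← hmul, inv_mul_cancel, hone]
  rw [_root_.mul_inv_rev, inv_inv, hmul j, hmul i]
  simp only [Matrix.mul_assoc]
  rw [h1, Matrix.mul_one]

include hone hmul hunit in
private lemma S_entry (i j : ι) (a : Fin (d i)) (b : Fin (d i)) (c e : Fin (d j)) :
    ∑ g : G, ρ i g a b * star (ρ j g c e)
      = (∑ g : G, ρ j g⁻¹ * Matrix.single c a (1:ℂ) * ρ i g) e b := by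
  rw [Matrix.sum_apply]
  refine Finset.sum_congr rfl fun g _ => ?_
  rw [rho_star d ρ hone hmul hunit j g c e]
  have : (ρ j g⁻¹ * Matrix.single c a (1:ℂ) * ρ i g) e b = ρ j g⁻¹ e c * ρ i g a b := by
    simp [Matrix.mul_apply, Matrix.single, ite_and, mul_ite, ite_mul,
      Finset.sum_ite_eq, Finset.sum_ite_eq']
  rw [this, mul_comm]

include hone hmul hunit hdpos hirr in
private lemma ortho_same (i : ι) (a b c e : Fin (d i)) :
    ∑ g : G, ρ i g a b * star (ρ i g c e)
      = (Fintype.card G : ℂ) / (d i) * (if c = a then 1 else 0)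
          * (if e = b then 1 else 0) := by
  rw [S_entry d ρ hone hmul hunit i i a b c e]
  set S : Matrix (Fin (d i)) (Fin (d i)) ℂ :=
    ∑ g : G, ρ i g⁻¹ * Matrix.single c a (1:ℂ) * ρ i g with hSdef
  have hSscal : S = (Matrix.trace S / (d i)) • 1 :=
    schur_scalar'_s12 (hdpos i) (ρ i) (hirr i) S
      (fun g => sum_intertwine d ρ hone hmul i i _ g)
  have htr : Matrix.trace S = (Fintype.card G : ℂ) * (if c = a then 1 else 0) := by
    rw [hSdef, Matrix.trace_sum]
    have key : ∀ g : G, Matrix.trace (ρ i g⁻¹ * Matrix.single c a (1:ℂ) * ρ i g)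
        = if c = a then 1 else 0 := by
      intro g
      rw [Matrix.trace_mul_cycle, rho_mul_inv d ρ hone hmul, Matrix.one_mul]
      simp only [Matrix.trace, Matrix.diag, Matrix.single, Matrix.of_apply, ite_and]
      rw [Finset.sum_ite_eq Finset.univ c (fun x => if a = x then 1 else 0)]
      simp [eq_comm]
    rw [Finset.sum_congr rfl fun g _ => key g, Finset.sum_const, Finset.card_univ]
    simp [mul_comm]
  rw [hSscal, Matrix.smul_apply, Matrix.one_apply, htr]
  by_cases hca : c = a <;> by_cases heb : e = b <;>
    simp [hca, heb, smul_eq_mul, div_eq_mul_inv] <;> ring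

include hone hmul hunit hirr hpair in
private lemma ortho_diff (i j : ι) (hij : i ≠ j) (a b : Fin (d i)) (c e : Fin (d j)) :
    ∑ g : G, ρ i g a b * star (ρ j g c e) = 0 := by
  rw [S_entry d ρ hone hmul hunit i j a b c e]
  have hS0 : (∑ g : G, ρ j g⁻¹ * Matrix.single c a (1:ℂ) * ρ i g) = 0 :=
    schur_zero' (ρ i) (ρ j) (hirr i) (hirr j) _
      (fun g => sum_intertwine d ρ hone hmul i j _ g) (hpair i j hij)
  rw [hS0]
  simp

end Main

/-- **Plancherel-type norm formula for a finite group.** -/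
theorem plancherel_norm_formula
    {G : Type*} [Group G] [Fintype G] {ι : Type*} [Fintype ι]
    (d : ι → ℕ) (ρ : ∀ i, G → Matrix (Fin (d i)) (Fin (d i)) ℂ)
    -- each `ρ i` is a unitary representation
    (hone : ∀ i, ρ i 1 = 1)
    (hmul : ∀ i (a b : G), ρ i (a * b) = ρ i a * ρ i b)
    (hunit : ∀ i (g : G), (ρ i g).conjTranspose * ρ i g = 1)
    -- each `ρ i` is irreducible
    (hdpos : ∀ i, 0 < d i)
    (hirr : ∀ i (U : Submodule ℂ (Fin (d i) → ℂ)),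
      (∀ g : G, ∀ u ∈ U, (ρ i g).mulVec u ∈ U) → U = ⊥ ∨ U = ⊤)
    -- the `ρ i` are pairwise non-isomorphic
    (hpair : ∀ i j, i ≠ j →
      ¬∃ T : Matrix (Fin (d j)) (Fin (d i)) ℂ,
        Function.Bijective T.mulVec ∧ ∀ g : G, ρ j g * T = T * ρ i g)
    -- every irreducible unitary representation of `G` is isomorphic to some `ρ i`
    (hcompl : ∀ (n : ℕ) (σ : G → Matrix (Fin n) (Fin n) ℂ),
      σ 1 = 1 → (∀ a b : G, σ (a * b) = σ a * σ b) →
      (∀ g : G, (σ g).conjTranspose * σ g = 1) → 0 < n →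
      (∀ U : Submodule ℂ (Fin n → ℂ),
        (∀ g : G, ∀ u ∈ U, (σ g).mulVec u ∈ U) → U = ⊥ ∨ U = ⊤) →
      ∃ i, ∃ T : Matrix (Fin n) (Fin (d i)) ℂ,
        Function.Bijective T.mulVec ∧ ∀ g : G, σ g * T = T * ρ i g)
    -- `f : G → ℂ` with Peter–Weyl components `f_ρ` of coordinate matrices `A i`
    (f : G → ℂ) (A : ∀ i, Matrix (Fin (d i)) (Fin (d i)) ℂ)
    (hA : ∀ g : G, f g = ∑ i, ∑ a, ∑ b, A i a b * ρ i g a b) :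
    (Fintype.card G : ℝ)⁻¹ * ∑ g : G, ‖f g‖ ^ 2
      = ∑ i, (d i : ℝ)⁻¹ * ∑ a, ∑ b, ‖A i a b‖ ^ 2 := by
  classical
  have main : ∑ g : G, f g * star (f g)
      = ∑ i, ∑ a, ∑ b, (Fintype.card G : ℂ) / (d i) * (A i a b * star (A i a b)) := by
    have hexp : ∀ g : G, f g * star (f g) = ∑ i, ∑ a, ∑ b, ∑ j, ∑ c, ∑ e,
        (A i a b * star (A j c e)) * (ρ i g a b * star (ρ j g c e)) := by
      intro g
      rw [hA g]
      simp only [Finset.sum_mul]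
      simp only [star_sum, star_mul', Finset.mul_sum]
      refine Finset.sum_congr rfl fun i _ => Finset.sum_congr rfl fun a _ =>
        Finset.sum_congr rfl fun b _ => Finset.sum_congr rfl fun j _ =>
        Finset.sum_congr rfl fun c _ => Finset.sum_congr rfl fun e _ => by ring
    simp only [hexp]
    rw [Finset.sum_comm]
    refine Finset.sum_congr rfl fun i _ => ?_
    rw [Finset.sum_comm]
    refine Finset.sum_congr rfl fun a _ => ?_
    rw [Finset.sum_comm]
    refine Finset.sum_congr rfl fun b _ => ?_
    rw [Finset.sum_comm]
    have hj : ∀ j : ι, (∑ g : G, ∑ c, ∑ e,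
        (A i a b * star (A j c e)) * (ρ i g a b * star (ρ j g c e)))
        = if j = i then (Fintype.card G : ℂ) / (d i) * (A i a b * star (A i a b))
          else 0 := by
      intro j
      rw [Finset.sum_comm]
      have hswap : ∀ c, (∑ g : G, ∑ e,
          (A i a b * star (A j c e)) * (ρ i g a b * star (ρ j g c e)))
          = ∑ e, (A i a b * star (A j c e)) * ∑ g : G, ρ i g a b * star (ρ j g c e) := by
        intro c
        rw [Finset.sum_comm]
        exact Finset.sum_congr rfl fun e _ => (Finset.mul_sum _ _ _).symm
      simp only [hswap]
      by_cases hji : j = i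
      · subst hji
        rw [if_pos rfl]
        simp only [ortho_same d ρ hone hmul hunit hdpos hirr j a b]
        simp only [mul_ite, mul_one, mul_zero, ite_mul, zero_mul, one_mul,
          Finset.sum_ite_eq', Finset.mem_univ, if_true, Finset.sum_ite_eq]
        ring
      · rw [if_neg hji]
        have h0 : ∀ (c e : Fin (d j)), (∑ g : G, ρ i g a b * star (ρ j g c e)) = 0 :=
          fun c e => ortho_diff d ρ hone hmul hunit hirr hpair i j
            (fun h => hji h.symm) a b c e
        refine Finset.sum_eq_zero fun c _ => Finset.sum_eq_zero fun e _ => ?_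
        rw [h0 c e, mul_zero]
    rw [Finset.sum_congr rfl fun j _ => hj j]
    simp
  have hcard : ((Fintype.card G : ℝ)) ≠ 0 := by
    exact_mod_cast (Fintype.card_pos (α := G)).ne'
  rw [← Complex.ofReal_inj]
  push_cast
  have hnorm : ∀ z : ℂ, ((‖z‖ : ℂ)) ^ 2 = z * star z := fun z =>
    (Complex.mul_conj' z).symm
  simp only [hnorm]
  rw [main, Finset.mul_sum]
  refine Finset.sum_congr rfl fun i _ => ?_
  simp only [Finset.mul_sum]
  refine Finset.sum_congr rfl fun a _ => Finset.sum_congr rfl fun b _ => ?_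
  have hd : ((d i : ℂ)) ≠ 0 := Nat.cast_ne_zero.mpr (hdpos i).ne'
  have hcardC : ((Fintype.card G : ℂ)) ≠ 0 := by exact_mod_cast hcard
  field_simp
end
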